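/- arXiv:2210.08486 — 3 statements merged into one kernel-verified Lean document; each statement's English description precedes it below -/
import Mathlib

section
/- Exponential supermartingale bound for sums of bounded adapted losses (intermediate claim in the proof of the online PAC-Bayes bound): Let (Ω, F, μ) be a probability space with a filtration (F_i)_{i=0,...,m}, F_0 trivial, and let X_1, ..., X_m be adapted random variables (X_i is F_i-measurable) with |X_i| ≤ K almost surely for each i. Then for every λ > 0, E[ exp( λ Σ_{i=1}^m ( E[X_i | F_{i-1}] − X_i ) ) ] ≤ exp( m λ² K² / 2 ). -/
open MeasureTheory ProbabilityTheory Real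

lemma hoeffding_pos {p : ℝ} (hp0 : 0 ≤ p) (hp1 : p ≤ 1) (t : ℝ) :
    0 < 1 - p + p * Real.exp t := by
  rcases eq_or_lt_of_le hp0 with h | h
  · simp [← h]
  · have := Real.exp_pos t
    nlinarith

lemma hoeffding_core {p : ℝ} (hp0 : 0 ≤ p) (hp1 : p ≤ 1) (t : ℝ) :
    Real.log (1 - p + p * Real.exp t) ≤ t ^ 2 / 8 + p * t := by
  set D : ℝ → ℝ := fun t => 1 - p + p * Real.exp t with hD_def
  have hD : ∀ t, 0 < D t := fun t => hoeffding_pos hp0 hp1 t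
  set f : ℝ → ℝ := fun t => t ^ 2 / 8 + p * t - Real.log (D t) with hf_def
  set f' : ℝ → ℝ := fun t => t / 4 + p - p * Real.exp t / D t with hf'_def
  set f'' : ℝ → ℝ := fun t => 1 / 4 - p * Real.exp t * (1 - p) / (D t) ^ 2 with hf''_def
  have hD' : ∀ t, HasDerivAt D (p * Real.exp t) t := fun t =>
    ((Real.hasDerivAt_exp t).const_mul p).const_add (1 - p)
  have hderiv : ∀ t, HasDerivAt f (f' t) t := by
    intro t
    have h1 : HasDerivAt (fun t : ℝ => t ^ 2 / 8) (t / 4) t := by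
      have := (hasDerivAt_pow 2 t).div_const 8
      refine this.congr_deriv ?_; norm_num; ring
    have h2 : HasDerivAt (fun t : ℝ => p * t) p t := by
      simpa using (hasDerivAt_id t).const_mul p
    have h3 : HasDerivAt (fun t => Real.log (D t)) (p * Real.exp t / D t) t :=
      (hD' t).log (hD t).ne'
    exact (h1.add h2).sub h3
  have hderiv' : ∀ t, HasDerivAt f' (f'' t) t := by
    intro t
    have h1 : HasDerivAt (fun t : ℝ => t / 4 + p) (1 / 4) t := by
      simpa using ((hasDerivAt_id t).div_const 4).add_const p
    have h2 : HasDerivAt (fun t => p * Real.exp t / D t)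
        ((p * Real.exp t * D t - p * Real.exp t * (p * Real.exp t)) / (D t) ^ 2) t :=
      ((Real.hasDerivAt_exp t).const_mul p).div (hD' t) (hD t).ne'
    have := h1.sub h2
    refine this.congr_deriv ?_
    have : D t = 1 - p + p * Real.exp t := rfl
    field_simp [hf''_def]
    ring
  have hf''_nonneg : ∀ t, 0 ≤ f'' t := by
    intro t
    have hDt := hD t
    have he := Real.exp_pos t
    have hb : 0 ≤ p * Real.exp t := by positivity
    have ha : 0 ≤ 1 - p := by linarith
    have hDeq : D t = (1 - p) + p * Real.exp t := rfl
    have key : 4 * (p * Real.exp t * (1 - p)) ≤ (D t) ^ 2 := by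
      rw [hDeq]; nlinarith [sq_nonneg ((1 - p) - p * Real.exp t)]
    have h2 : p * Real.exp t * (1 - p) / (D t) ^ 2 ≤ 1 / 4 := by
      rw [div_le_iff₀ (by positivity)]
      nlinarith
    simp only [hf''_def]
    linarith
  have hf'0 : f' 0 = 0 := by
    simp only [hf'_def, hD_def]
    simp
  have hf'mono : Monotone f' :=
    monotone_of_deriv_nonneg (fun t => (hderiv' t).differentiableAt)
      (fun t => by rw [(hderiv' t).deriv]; exact hf''_nonneg t)
  have hf0 : f 0 = 0 := by
    simp only [hf_def, hD_def]
    simp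
  have hfnonneg : ∀ t, 0 ≤ f t := by
    intro t
    rcases le_total 0 t with ht | ht
    · have hmono : MonotoneOn f (Set.Ici 0) := by
        apply monotoneOn_of_deriv_nonneg (convex_Ici 0)
          (fun x _ => (hderiv x).differentiableAt.continuousAt.continuousWithinAt)
          (fun x hx => (hderiv x).differentiableAt.differentiableWithinAt)
        intro x hx
        rw [(hderiv x).deriv]
        rw [interior_Ici, Set.mem_Ioi] at hx
        have h := hf'mono hx.le
        rw [hf'0] at h
        exact h
      have := hmono (Set.self_mem_Ici) (Set.mem_Ici.2 ht) ht
      rwa [hf0] at this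
    · have hanti : AntitoneOn f (Set.Iic 0) := by
        apply antitoneOn_of_deriv_nonpos (convex_Iic 0)
          (fun x _ => (hderiv x).differentiableAt.continuousAt.continuousWithinAt)
          (fun x hx => (hderiv x).differentiableAt.differentiableWithinAt)
        intro x hx
        rw [(hderiv x).deriv]
        rw [interior_Iic, Set.mem_Iio] at hx
        have h := hf'mono hx.le
        rw [hf'0] at h
        exact h
      have := hanti (Set.mem_Iic.2 ht) (Set.self_mem_Iic) ht
      rwa [hf0] at this
  have := hfnonneg t
  simp only [hf_def] at this
  linarith


lemma chord_bound {K lam x : ℝ} (hKpos : 0 < K) (hx : |x| ≤ K) :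
    Real.exp (-(lam * x)) ≤
      ((K - x) / (2 * K)) * Real.exp (lam * K) + ((K + x) / (2 * K)) * Real.exp (-(lam * K)) := by
  obtain ⟨hx1, hx2⟩ := abs_le.1 hx
  have ha : (0:ℝ) ≤ (K - x) / (2 * K) := div_nonneg (by linarith) (by linarith)
  have hb : (0:ℝ) ≤ (K + x) / (2 * K) := by
    apply div_nonneg (by linarith) (by linarith)
  have hab : (K - x) / (2 * K) + (K + x) / (2 * K) = 1 := by
    field_simp
    ring
  have h := convexOn_exp.2 (Set.mem_univ (lam * K)) (Set.mem_univ (-(lam * K))) ha hb hab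
  simp only [smul_eq_mul] at h
  have harg : (K - x) / (2 * K) * (lam * K) + (K + x) / (2 * K) * (-(lam * K)) = -(lam * x) := by
    field_simp
    ring
  rwa [harg] at h

lemma hoeff_scalar {K lam c : ℝ} (hKpos : 0 < K) (hc : |c| ≤ K) :
    Real.exp (lam * c) *
      (((K - c) / (2 * K)) * Real.exp (lam * K) + ((K + c) / (2 * K)) * Real.exp (-(lam * K)))
      ≤ Real.exp (lam ^ 2 * K ^ 2 / 2) := by
  obtain ⟨hc1, hc2⟩ := abs_le.1 hc
  set p : ℝ := (K + c) / (2 * K) with hp_def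
  set t : ℝ := -(2 * lam * K) with ht_def
  have hp0 : 0 ≤ p := div_nonneg (by linarith) (by linarith)
  have hp1 : p ≤ 1 := by
    rw [div_le_one (by linarith)]
    linarith
  have hmul : Real.exp (lam * K) * Real.exp t = Real.exp (-(lam * K)) := by
    rw [← Real.exp_add]
    congr 1
    rw [ht_def]
    ring
  have h1p : (1:ℝ) - p = (K - c) / (2 * K) := by
    rw [hp_def]
    field_simp
    ring
  have hEq1 : ((K - c) / (2 * K)) * Real.exp (lam * K) + ((K + c) / (2 * K)) * Real.exp (-(lam * K))
      = Real.exp (lam * K) * (1 - p + p * Real.exp t) := by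
    rw [mul_add, ← hmul, h1p]
    ring
  have hpos := hoeffding_pos hp0 hp1 t
  have hcore : 1 - p + p * Real.exp t ≤ Real.exp (t ^ 2 / 8 + p * t) :=
    (Real.log_le_iff_le_exp hpos).1 (hoeffding_core hp0 hp1 t)
  have hexp : lam * c + (lam * K + (t ^ 2 / 8 + p * t)) = lam ^ 2 * K ^ 2 / 2 := by
    have hpt : p * t = -(lam * (K + c)) := by
      rw [hp_def, ht_def]
      field_simp
    have htsq : t ^ 2 / 8 = lam ^ 2 * K ^ 2 / 2 := by rw [ht_def]; ring
    rw [hpt, htsq]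
    ring
  calc Real.exp (lam * c) *
      (((K - c) / (2 * K)) * Real.exp (lam * K) + ((K + c) / (2 * K)) * Real.exp (-(lam * K)))
      = Real.exp (lam * c) * (Real.exp (lam * K) * (1 - p + p * Real.exp t)) := by rw [hEq1]
    _ ≤ Real.exp (lam * c) * (Real.exp (lam * K) * Real.exp (t ^ 2 / 8 + p * t)) := by
        apply mul_le_mul_of_nonneg_left _ (Real.exp_pos _).le
        exact mul_le_mul_of_nonneg_left hcore (Real.exp_pos _).le
    _ = Real.exp (lam * c + (lam * K + (t ^ 2 / 8 + p * t))) := by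
        rw [← Real.exp_add, ← Real.exp_add]
    _ = Real.exp (lam ^ 2 * K ^ 2 / 2) := by rw [hexp]


lemma affine_eq {K lam : ℝ} (hK : K ≠ 0) (y : ℝ) :
    ((K - y) / (2 * K)) * Real.exp (lam * K) + ((K + y) / (2 * K)) * Real.exp (-(lam * K))
      = (Real.exp (lam * K) + Real.exp (-(lam * K))) / 2
        + ((Real.exp (-(lam * K)) - Real.exp (lam * K)) / (2 * K)) * y := by
  field_simp
  ring

lemma condexp_abs_le {Ω : Type*} {mΩ : MeasurableSpace Ω} (μ : Measure Ω)
    [IsProbabilityMeasure μ] {m' : MeasurableSpace Ω} (hm : m' ≤ mΩ)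
    {X : Ω → ℝ} (hXint : Integrable X μ) {K : ℝ} (hK : ∀ᵐ ω ∂μ, |X ω| ≤ K) :
    ∀ᵐ ω ∂μ, |(μ[X|m']) ω| ≤ K := by
  have h1 : μ[X|m'] ≤ᵐ[μ] μ[fun _ => K|m'] :=
    condExp_mono hXint (integrable_const K) (hK.mono fun ω h => (abs_le.1 h).2)
  have h2 : μ[fun _ => (-K)|m'] ≤ᵐ[μ] μ[X|m'] :=
    condExp_mono (integrable_const _) hXint (hK.mono fun ω h => (abs_le.1 h).1)
  rw [condExp_const hm] at h1 h2
  filter_upwards [h1, h2] with ω ha hb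
  exact abs_le.2 ⟨hb, ha⟩

lemma cond_step {Ω : Type*} {mΩ : MeasurableSpace Ω} (μ : Measure Ω)
    [IsProbabilityMeasure μ] {m' : MeasurableSpace Ω} (hm : m' ≤ mΩ)
    {X : Ω → ℝ} (hX : Measurable[mΩ] X) {K : ℝ} (hKpos : 0 < K)
    (hK : ∀ᵐ ω ∂μ, |X ω| ≤ K) (lam : ℝ) :
    μ[fun ω => Real.exp (lam * ((μ[X|m']) ω - X ω))|m']
      ≤ᵐ[μ] fun _ => Real.exp (lam ^ 2 * K ^ 2 / 2) := by
  set c : Ω → ℝ := μ[X|m'] with hc_def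
  set α : ℝ := (Real.exp (lam * K) + Real.exp (-(lam * K))) / 2 with hα_def
  set β : ℝ := (Real.exp (-(lam * K)) - Real.exp (lam * K)) / (2 * K) with hβ_def
  have hXa : AEStronglyMeasurable[mΩ] X μ := hX.aestronglyMeasurable
  have hXint : Integrable X μ := by
    refine (integrable_const K).mono' hXa ?_
    filter_upwards [hK] with ω h
    rwa [Real.norm_eq_abs]
  have hc_bdd : ∀ᵐ ω ∂μ, |c ω| ≤ K := condexp_abs_le μ hm hXint hK
  have hc_meas : StronglyMeasurable[m'] c := stronglyMeasurable_condExp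
  -- the two factors
  set f : Ω → ℝ := fun ω => Real.exp (lam * c ω) with hf_def
  set g : Ω → ℝ := fun ω => Real.exp (-(lam * X ω)) with hg_def
  have hfm : StronglyMeasurable[m'] f :=
    Real.continuous_exp.comp_stronglyMeasurable (hc_meas.const_mul lam)
  have hf_bdd : ∀ᵐ ω ∂μ, f ω ≤ Real.exp (|lam| * K) := by
    filter_upwards [hc_bdd] with ω h
    apply Real.exp_le_exp.2
    calc lam * c ω ≤ |lam * c ω| := le_abs_self _
      _ = |lam| * |c ω| := abs_mul _ _
      _ ≤ |lam| * K := by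
          apply mul_le_mul_of_nonneg_left h (abs_nonneg _)
  have hg_bdd : ∀ᵐ ω ∂μ, g ω ≤ Real.exp (|lam| * K) := by
    filter_upwards [hK] with ω h
    apply Real.exp_le_exp.2
    calc -(lam * X ω) ≤ |lam * X ω| := neg_le_abs _
      _ = |lam| * |X ω| := abs_mul _ _
      _ ≤ |lam| * K := mul_le_mul_of_nonneg_left h (abs_nonneg _)
  have hg_meas : AEStronglyMeasurable[mΩ] g μ :=
    ((hX.const_mul lam).neg.exp).aestronglyMeasurable
  have hg_int : Integrable g μ := by
    refine (integrable_const (Real.exp (|lam| * K))).mono' hg_meas ?_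
    filter_upwards [hg_bdd] with ω h
    rw [Real.norm_eq_abs, abs_of_pos (Real.exp_pos _)]
    exact h
  have hfg_int : Integrable (f * g) μ := by
    have hmeas : AEStronglyMeasurable[mΩ] (f * g) μ :=
      ((hfm.mono hm).aestronglyMeasurable.mul hg_meas)
    refine (integrable_const (Real.exp (|lam| * K) * Real.exp (|lam| * K))).mono' hmeas ?_
    filter_upwards [hf_bdd, hg_bdd] with ω h1 h2
    rw [Pi.mul_apply, Real.norm_eq_abs, abs_mul, abs_of_pos (Real.exp_pos _),
      abs_of_pos (Real.exp_pos _)]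
    exact mul_le_mul h1 h2 (Real.exp_pos _).le (Real.exp_pos _).le
  -- rewrite the target function as a product
  have hsplit : (fun ω => Real.exp (lam * (c ω - X ω))) = f * g := by
    funext ω
    rw [Pi.mul_apply, hf_def, hg_def, ← Real.exp_add]
    congr 1
    ring
  -- pull out
  have hpull : μ[f * g|m'] =ᵐ[μ] f * μ[g|m'] :=
    condExp_mul_of_stronglyMeasurable_left hfm hfg_int hg_int
  -- chord bound on g, conditionally
  have haff_int : Integrable (fun ω => α + β * X ω) μ :=
    (integrable_const α).add (hXint.const_mul β)
  have hchord : g ≤ᵐ[μ] fun ω => α + β * X ω := by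
    filter_upwards [hK] with ω h
    rw [hg_def]
    calc Real.exp (-(lam * X ω))
        ≤ ((K - X ω) / (2 * K)) * Real.exp (lam * K)
          + ((K + X ω) / (2 * K)) * Real.exp (-(lam * K)) := chord_bound hKpos h
      _ = α + β * X ω := affine_eq hKpos.ne' (X ω)
  have hcond1 : μ[g|m'] ≤ᵐ[μ] μ[fun ω => α + β * X ω|m'] :=
    condExp_mono hg_int haff_int hchord
  have hlin : μ[fun ω => α + β * X ω|m'] =ᵐ[μ] fun ω => α + β * c ω := by
    have he : (fun ω => α + β * X ω) = (fun _ => α) + β • X := by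
      funext ω; simp [smul_eq_mul]
    rw [he]
    calc μ[(fun _ => α) + β • X|m']
        =ᵐ[μ] μ[fun _ => α|m'] + μ[β • X|m'] :=
          condExp_add (integrable_const α) (hXint.smul β) m'
      _ =ᵐ[μ] (fun _ => α) + β • c := by
          rw [condExp_const hm]
          exact Filter.EventuallyEq.add (Filter.EventuallyEq.refl _ _) (condExp_smul β X m')
      _ = fun ω => α + β * c ω := by funext ω; simp [smul_eq_mul]
  -- assemble
  rw [hsplit]
  calc μ[f * g|m'] =ᵐ[μ] f * μ[g|m'] := hpull
    _ ≤ᵐ[μ] f * fun ω => α + β * c ω := by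
        filter_upwards [hcond1, hlin] with ω h1 h2
        simp only [Pi.mul_apply]
        exact mul_le_mul_of_nonneg_left (le_of_le_of_eq h1 h2) (Real.exp_pos _).le
    _ ≤ᵐ[μ] fun _ => Real.exp (lam ^ 2 * K ^ 2 / 2) := by
        filter_upwards [hc_bdd] with ω h
        simp only [Pi.mul_apply]
        calc f ω * (α + β * c ω)
            = Real.exp (lam * c ω) *
              (((K - c ω) / (2 * K)) * Real.exp (lam * K)
                + ((K + c ω) / (2 * K)) * Real.exp (-(lam * K))) := by
              rw [hf_def, affine_eq hKpos.ne' (c ω)]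
          _ ≤ Real.exp (lam ^ 2 * K ^ 2 / 2) := hoeff_scalar hKpos h


section
variable {Ω : Type*} {mΩ : MeasurableSpace Ω}

lemma key_induction (μ : Measure Ω) [IsProbabilityMeasure μ]
    (ℱ : Filtration ℕ mΩ) (X : ℕ → Ω → ℝ) {K : ℝ} (hKpos : 0 < K)
    {lam : ℝ} (hlam : 0 < lam) :
    ∀ m : ℕ, (∀ i ∈ Finset.Icc 1 m, Measurable[ℱ i] (X i)) →
      (∀ i ∈ Finset.Icc 1 m, ∀ᵐ ω ∂μ, |X i ω| ≤ K) →
      ∫ ω, Real.exp (lam * ∑ i ∈ Finset.Icc 1 m, ((μ[X i | ℱ (i - 1)]) ω - X i ω)) ∂μ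
        ≤ Real.exp (m * lam ^ 2 * K ^ 2 / 2) := by
  intro m
  induction m with
  | zero =>
      intro _ _
      rw [Finset.Icc_eq_empty (by omega)]
      simp
  | succ m ih =>
      intro hadap hK
      have hsub : Finset.Icc 1 m ⊆ Finset.Icc 1 (m + 1) :=
        Finset.Icc_subset_Icc_right (Nat.le_succ m)
      -- basic facts about each X i
      have hXmeas : ∀ i ∈ Finset.Icc 1 (m + 1), Measurable[mΩ] (X i) :=
        fun i hi => (hadap i hi).mono (ℱ.le i) le_rfl
      have hXint : ∀ i ∈ Finset.Icc 1 (m + 1), Integrable (X i) μ := by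
        intro i hi
        refine (integrable_const K).mono' (hXmeas i hi).aestronglyMeasurable ?_
        filter_upwards [hK i hi] with ω h
        rwa [Real.norm_eq_abs]
      have hYbdd : ∀ i ∈ Finset.Icc 1 (m + 1),
          ∀ᵐ ω ∂μ, |(μ[X i|ℱ (i - 1)]) ω - X i ω| ≤ 2 * K := by
        intro i hi
        filter_upwards [condexp_abs_le μ (ℱ.le (i - 1)) (hXint i hi) (hK i hi), hK i hi]
          with ω h1 h2
        calc |(μ[X i|ℱ (i - 1)]) ω - X i ω| ≤ |(μ[X i|ℱ (i - 1)]) ω| + |X i ω| := abs_sub _ _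
          _ ≤ 2 * K := by linarith
      -- the truncated sum and last factor
      set S : Ω → ℝ := fun ω => ∑ i ∈ Finset.Icc 1 m, ((μ[X i|ℱ (i - 1)]) ω - X i ω)
        with hS_def
      set F : Ω → ℝ := fun ω => Real.exp (lam * S ω) with hF_def
      set G : Ω → ℝ := fun ω => Real.exp (lam * ((μ[X (m + 1)|ℱ m]) ω - X (m + 1) ω))
        with hG_def
      have hmem : m + 1 ∈ Finset.Icc 1 (m + 1) := Finset.mem_Icc.2 ⟨by omega, le_rfl⟩
      -- split the integrand
      have hsplit : (fun ω => Real.exp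
          (lam * ∑ i ∈ Finset.Icc 1 (m + 1), ((μ[X i|ℱ (i - 1)]) ω - X i ω))) = F * G := by
        funext ω
        rw [Finset.sum_Icc_succ_top (by omega : 1 ≤ m + 1)]
        rw [Pi.mul_apply, hF_def, hG_def, ← Real.exp_add]
        congr 1
        simp only [Nat.add_sub_cancel]
        ring
      -- measurability of F w.r.t. ℱ m
      have hSmeas : Measurable[ℱ m] S := by
        apply Finset.measurable_sum
        intro i hi
        have hi' := Finset.mem_Icc.1 hi
        have h1 : Measurable[ℱ m] (μ[X i|ℱ (i - 1)]) :=
          (stronglyMeasurable_condExp.mono (ℱ.mono (by omega : i - 1 ≤ m))).measurable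
        have h2 : Measurable[ℱ m] (X i) :=
          (hadap i (hsub hi)).mono (ℱ.mono hi'.2) le_rfl
        exact h1.sub h2
      have hFm : StronglyMeasurable[ℱ m] F :=
        ((hSmeas.const_mul lam).exp).stronglyMeasurable
      -- bounds
      have hS_bdd : ∀ᵐ ω ∂μ, |S ω| ≤ m * (2 * K) := by
        have hall : ∀ᵐ ω ∂μ, ∀ i ∈ Finset.Icc 1 m,
            |(μ[X i|ℱ (i - 1)]) ω - X i ω| ≤ 2 * K :=
          (ae_ball_iff (Finset.Icc 1 m).countable_toSet).2 fun i hi => hYbdd i (hsub hi)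
        filter_upwards [hall] with ω h
        calc |S ω| ≤ ∑ i ∈ Finset.Icc 1 m, |(μ[X i|ℱ (i - 1)]) ω - X i ω| :=
              Finset.abs_sum_le_sum_abs _ _
          _ ≤ (Finset.Icc 1 m).card • (2 * K) := Finset.sum_le_card_nsmul _ _ _ h
          _ = m * (2 * K) := by
              rw [Nat.card_Icc]
              simp [nsmul_eq_mul]
      have hF_bdd : ∀ᵐ ω ∂μ, F ω ≤ Real.exp (lam * (m * (2 * K))) := by
        filter_upwards [hS_bdd] with ω h
        apply Real.exp_le_exp.2
        apply mul_le_mul_of_nonneg_left _ hlam.le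
        exact (le_abs_self _).trans h
      have hG_bdd : ∀ᵐ ω ∂μ, G ω ≤ Real.exp (lam * (2 * K)) := by
        filter_upwards [hYbdd (m + 1) hmem] with ω h
        apply Real.exp_le_exp.2
        apply mul_le_mul_of_nonneg_left _ hlam.le
        simp only [Nat.add_sub_cancel] at h
        exact (le_abs_self _).trans h
      -- integrability
      have hF_int : Integrable F μ := by
        refine (integrable_const (Real.exp (lam * (m * (2 * K))))).mono'
          ((hFm.mono (ℱ.le m)).aestronglyMeasurable) ?_
        filter_upwards [hF_bdd] with ω h
        rw [Real.norm_eq_abs, abs_of_pos (Real.exp_pos _)]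
        exact h
      have hG_meas : AEStronglyMeasurable G μ := by
        have h1 : Measurable[mΩ] (μ[X (m + 1)|ℱ m]) :=
          (stronglyMeasurable_condExp.mono (ℱ.le m)).measurable
        exact ((((h1.sub (hXmeas (m + 1) hmem)).const_mul lam)).exp).aestronglyMeasurable
      have hG_int : Integrable G μ := by
        refine (integrable_const (Real.exp (lam * (2 * K)))).mono' hG_meas ?_
        filter_upwards [hG_bdd] with ω h
        rw [Real.norm_eq_abs, abs_of_pos (Real.exp_pos _)]
        exact h
      have hFG_int : Integrable (F * G) μ := by
        refine (integrable_const (Real.exp (lam * (m * (2 * K))) * Real.exp (lam * (2 * K)))).mono'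
          (((hFm.mono (ℱ.le m)).aestronglyMeasurable).mul hG_meas) ?_
        filter_upwards [hF_bdd, hG_bdd] with ω h1 h2
        rw [Pi.mul_apply, Real.norm_eq_abs, abs_mul, abs_of_pos (Real.exp_pos _),
          abs_of_pos (Real.exp_pos _)]
        exact mul_le_mul h1 h2 (Real.exp_pos _).le (Real.exp_pos _).le
      -- the conditional bound
      have hcond : μ[G|ℱ m] ≤ᵐ[μ] fun _ => Real.exp (lam ^ 2 * K ^ 2 / 2) := by
        have h := cond_step μ (ℱ.le m) (hXmeas (m + 1) hmem) hKpos (hK (m + 1) hmem) lam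
        exact h
      -- pull out
      have hpull : μ[F * G|ℱ m] =ᵐ[μ] F * μ[G|ℱ m] :=
        condExp_mul_of_stronglyMeasurable_left hFm hFG_int hG_int
      have hFcond_int : Integrable (F * μ[G|ℱ m]) μ := integrable_condExp.congr hpull
      -- main computation
      rw [hsplit]
      have step1 : ∫ ω, (F * G) ω ∂μ = ∫ ω, (F * μ[G|ℱ m]) ω ∂μ := by
        rw [← integral_condExp (ℱ.le m) (f := F * G)]
        exact integral_congr_ae hpull
      have step2 : ∫ ω, (F * μ[G|ℱ m]) ω ∂μ
          ≤ ∫ ω, F ω * Real.exp (lam ^ 2 * K ^ 2 / 2) ∂μ := by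
        apply integral_mono_ae hFcond_int (hF_int.mul_const _)
        filter_upwards [hcond] with ω h
        simp only [Pi.mul_apply]
        apply mul_le_mul_of_nonneg_left h (Real.exp_pos _).le
      have step3 : ∫ ω, F ω * Real.exp (lam ^ 2 * K ^ 2 / 2) ∂μ
          = (∫ ω, F ω ∂μ) * Real.exp (lam ^ 2 * K ^ 2 / 2) := integral_mul_const _ _
      have step4 : (∫ ω, F ω ∂μ) ≤ Real.exp (m * lam ^ 2 * K ^ 2 / 2) :=
        ih (fun i hi => hadap i (hsub hi)) (fun i hi => hK i (hsub hi))
      calc ∫ ω, (F * G) ω ∂μ = ∫ ω, (F * μ[G|ℱ m]) ω ∂μ := step1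
        _ ≤ ∫ ω, F ω * Real.exp (lam ^ 2 * K ^ 2 / 2) ∂μ := step2
        _ = (∫ ω, F ω ∂μ) * Real.exp (lam ^ 2 * K ^ 2 / 2) := step3
        _ ≤ Real.exp (m * lam ^ 2 * K ^ 2 / 2) * Real.exp (lam ^ 2 * K ^ 2 / 2) :=
            mul_le_mul_of_nonneg_right step4 (Real.exp_pos _).le
        _ = Real.exp ((m + 1 : ℕ) * lam ^ 2 * K ^ 2 / 2) := by
            rw [← Real.exp_add]
            congr 1
            push_cast
            ring
end


/-- Exponential supermartingale bound for sums of bounded adapted losses. -/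
theorem exp_supermartingale_bound {Ω : Type*} {mΩ : MeasurableSpace Ω} (μ : Measure Ω)
    [IsProbabilityMeasure μ] (m : ℕ) (ℱ : Filtration ℕ mΩ) (hF0 : ℱ 0 = ⊥)
    (X : ℕ → Ω → ℝ) (hadap : ∀ i ∈ Finset.Icc 1 m, Measurable[ℱ i] (X i))
    (K : ℝ) (hK : ∀ i ∈ Finset.Icc 1 m, ∀ᵐ ω ∂μ, |X i ω| ≤ K)
    (lam : ℝ) (hlam : 0 < lam) :
    ∫ ω, Real.exp (lam * ∑ i ∈ Finset.Icc 1 m, ((μ[X i | ℱ (i - 1)]) ω - X i ω)) ∂μ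
      ≤ Real.exp (m * lam ^ 2 * K ^ 2 / 2) := by
  rcases Nat.eq_zero_or_pos m with hm | hm
  · subst hm
    rw [Finset.Icc_eq_empty (by omega)]
    simp
  · have h1m : 1 ∈ Finset.Icc 1 m := Finset.mem_Icc.2 ⟨le_rfl, hm⟩
    have hK0 : 0 ≤ K := by
      obtain ⟨ω, hω⟩ := (hK 1 h1m).exists
      exact (abs_nonneg _).trans hω
    rcases eq_or_lt_of_le hK0 with hK0' | hKpos
    · -- degenerate case K = 0 : all X i vanish a.e.
      have hz : ∀ i ∈ Finset.Icc 1 m, X i =ᵐ[μ] 0 := by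
        intro i hi
        filter_upwards [hK i hi] with ω h
        have : |X i ω| ≤ 0 := by rwa [← hK0'] at h
        simpa using le_antisymm this (abs_nonneg _)
      have hcz : ∀ i ∈ Finset.Icc 1 m, μ[X i|ℱ (i - 1)] =ᵐ[μ] 0 := by
        intro i hi
        refine (condExp_congr_ae (hz i hi)).trans ?_
        rw [condExp_zero]
      have hsum : ∀ᵐ ω ∂μ,
          (∑ i ∈ Finset.Icc 1 m, ((μ[X i|ℱ (i - 1)]) ω - X i ω)) = 0 := by
        have hall : ∀ᵐ ω ∂μ, ∀ i ∈ Finset.Icc 1 m,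
            (μ[X i|ℱ (i - 1)]) ω = 0 ∧ X i ω = 0 :=
          (ae_ball_iff (Finset.Icc 1 m).countable_toSet).2
            fun i hi => ((hcz i hi).and (hz i hi)).mono fun ω h => by
              simpa using h
        filter_upwards [hall] with ω h
        apply Finset.sum_eq_zero
        intro i hi
        rw [(h i hi).1, (h i hi).2, sub_zero]
      have : ∫ ω, Real.exp (lam * ∑ i ∈ Finset.Icc 1 m,
          ((μ[X i|ℱ (i - 1)]) ω - X i ω)) ∂μ = ∫ (_ : Ω), (1 : ℝ) ∂μ := by
        apply integral_congr_ae
        filter_upwards [hsum] with ω h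
        rw [h]
        simp
      rw [this, ← hK0']
      simp
    · exact key_induction μ ℱ X hKpos hlam m hadap hK
end

section
/- Gaussian expectation of the exponential bounded loss (corrected form of the paper's closed-form expression): Fix ε > 0, y ∈ ℝ, m ∈ ℝ and σ > 0, and define the bounded loss ℓ_exp(y, ŷ) = 1 − exp( −((y − ŷ)/ε)² ). If h is distributed according to the Gaussian measure on ℝ with mean m and variance σ², then E[ ℓ_exp(y, h) ] = 1 − (1 + 2σ²/ε²)^{−1/2} · exp( −(y − m)² / (2σ² + ε²) ). -/
open MeasureTheory ProbabilityTheory Real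

/-- Gaussian expectation of the exponential bounded loss
`ℓ_exp(y, ŷ) = 1 − exp(−((y − ŷ)/ε)²)`. -/
theorem gaussian_exp_loss (ε y m σ : ℝ) (hε : 0 < ε) (hσ : 0 < σ) :
    ∫ h, (1 - Real.exp (-((y - h) / ε) ^ 2))
        ∂(gaussianReal m ⟨σ ^ 2, sq_nonneg σ⟩)
      = 1 - (1 + 2 * σ ^ 2 / ε ^ 2) ^ (-(1 / 2 : ℝ))
          * Real.exp (-(y - m) ^ 2 / (2 * σ ^ 2 + ε ^ 2)) := by
  set v : NNReal := ⟨σ ^ 2, sq_nonneg σ⟩ with hv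
  have hvcoe : (v : ℝ) = σ ^ 2 := rfl
  have hvne : v ≠ 0 := by
    intro h
    have : (v : ℝ) = 0 := by rw [h]; simp
    rw [hvcoe] at this
    exact (by positivity : (0:ℝ) < σ ^ 2).ne' this
  have hε2 : (0:ℝ) < ε ^ 2 := by positivity
  have hσ2 : (0:ℝ) < σ ^ 2 := by positivity
  set g : ℝ → ℝ := fun x => Real.exp (-((y - x) / ε) ^ 2) with hg
  -- integrability of g
  have hgmeas : Measurable g := by fun_prop
  have hgint : Integrable g (gaussianReal m v) := by
    refine (integrable_const (1:ℝ)).mono' hgmeas.aestronglyMeasurable ?_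
    filter_upwards with x
    rw [Real.norm_eq_abs, abs_of_pos (Real.exp_pos _)]
    exact Real.exp_le_one_iff.2 (neg_nonpos.2 (sq_nonneg _))
  have hsplit : ∫ h, (1 - g h) ∂(gaussianReal m v)
      = 1 - ∫ h, g h ∂(gaussianReal m v) := by
    rw [integral_sub (integrable_const 1) hgint]
    simp
  rw [hsplit]
  congr 1
  -- rewrite as integral against Lebesgue with density
  have hpdf_nonneg : ∀ x, 0 ≤ gaussianPDFReal m v x := gaussianPDFReal_nonneg m v
  have hmeas : Measurable fun x => (gaussianPDFReal m v x).toNNReal :=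
    (measurable_gaussianPDFReal m v).real_toNNReal
  have h1 : ∫ h, g h ∂(gaussianReal m v) = ∫ x, gaussianPDFReal m v x * g x := by
    rw [gaussianReal_of_var_ne_zero m hvne]
    have : (gaussianPDF m v) = fun x => ((gaussianPDFReal m v x).toNNReal : ENNReal) := by
      funext x
      simp [gaussianPDF, ENNReal.ofReal]
    rw [this, integral_withDensity_eq_integral_smul hmeas]
    refine integral_congr_ae (Filter.Eventually.of_forall fun x => ?_)
    simp only [NNReal.smul_def, Real.coe_toNNReal _ (hpdf_nonneg x), smul_eq_mul]
  rw [h1]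
  -- complete the square
  set a : ℝ := (ε ^ 2 + 2 * σ ^ 2) / (2 * σ ^ 2 * ε ^ 2) with ha
  have hapos : 0 < a := by positivity
  set x₀ : ℝ := (m * ε ^ 2 + 2 * σ ^ 2 * y) / (2 * σ ^ 2 + ε ^ 2) with hx₀
  set K : ℝ := Real.exp (-(y - m) ^ 2 / (2 * σ ^ 2 + ε ^ 2)) with hK
  have hsum : (0:ℝ) < 2 * σ ^ 2 + ε ^ 2 := by positivity
  have h2 : ∀ x, gaussianPDFReal m v x * g x
      = (Real.sqrt (2 * π * v))⁻¹ * K * Real.exp (-a * (x - x₀) ^ 2) := by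
    intro x
    simp only [gaussianPDFReal, hg, hK, mul_assoc, ← Real.exp_add]
    congr 1
    congr 1
    rw [hvcoe, hx₀, ha]
    have hεne : ε ≠ 0 := hε.ne'
    have hσne : σ ≠ 0 := hσ.ne'
    have hsne : (2 * σ ^ 2 + ε ^ 2) ≠ 0 := hsum.ne'
    field_simp
    ring
  simp_rw [h2]
  rw [integral_const_mul, integral_sub_right_eq_self (fun x => Real.exp (-a * x ^ 2)) x₀,
    integral_gaussian a]
  -- now evaluate constants
  have hpia : π / a = (2 * π * σ ^ 2) / (1 + 2 * σ ^ 2 / ε ^ 2) := by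
    rw [ha]; field_simp
  have hden : (0:ℝ) < 1 + 2 * σ ^ 2 / ε ^ 2 := by positivity
  have h2πσ : (0:ℝ) < 2 * π * σ ^ 2 := by positivity
  rw [hpia, Real.sqrt_div h2πσ.le, hvcoe]
  have hrpow : (1 + 2 * σ ^ 2 / ε ^ 2) ^ (-(1 / 2 : ℝ))
      = (Real.sqrt (1 + 2 * σ ^ 2 / ε ^ 2))⁻¹ := by
    rw [Real.rpow_neg hden.le, Real.sqrt_eq_rpow]
  rw [hrpow]
  have hs1 : Real.sqrt (2 * π * σ ^ 2) ≠ 0 := by positivity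
  have hs2 : Real.sqrt (1 + 2 * σ ^ 2 / ε ^ 2) ≠ 0 := by positivity
  field_simp
end

section
/- Gaussian expectation of the clipped squared bounded loss (corrected form of the paper's closed-form expression): Fix ε > 0, y ∈ ℝ, m ∈ ℝ and σ > 0, and define the bounded loss ℓ_2(y, ŷ) = min{ ((y − ŷ)/ε)², 1 }. If h is distributed according to the Gaussian measure on ℝ with mean m and variance σ², then E[ ℓ_2(y, h) ] = 1 + ( ((y − m)² + σ²)/ε² − 1 ) · ( Φ((y + ε − m)/σ) − Φ((y − ε − m)/σ) ) + (σ / (√(2π) ε²)) · ( (y − ε − m) · exp( −(y + ε − m)²/(2σ²) ) − (y + ε − m) · exp( −(y − ε − m)²/(2σ²) ) ). -/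
open MeasureTheory ProbabilityTheory Real

/-- The standard normal cumulative distribution function
`Φ(z) = ∫_{−∞}^z (2π)^{−1/2} e^{−t²/2} dt`. -/
noncomputable def stdNormalCDF (z : ℝ) : ℝ :=
  ∫ t in Set.Iic z, (Real.sqrt (2 * Real.pi))⁻¹ * Real.exp (-t ^ 2 / 2)

lemma integrable_std : Integrable (fun t : ℝ => (Real.sqrt (2 * Real.pi))⁻¹ * Real.exp (-t ^ 2 / 2)) := by
  have : Integrable (fun t : ℝ => Real.exp (-(1/2) * t ^ 2)) := integrable_exp_neg_mul_sq (by norm_num)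
  simpa [neg_div, mul_comm, neg_mul, mul_div_assoc, div_eq_mul_inv, mul_comm (2:ℝ)⁻¹] using this.const_mul (Real.sqrt (2 * Real.pi))⁻¹

lemma hasDerivAt_stdNormalCDF (z : ℝ) :
    HasDerivAt stdNormalCDF ((Real.sqrt (2 * Real.pi))⁻¹ * Real.exp (-z ^ 2 / 2)) z := by
  set g : ℝ → ℝ := fun t => (Real.sqrt (2 * Real.pi))⁻¹ * Real.exp (-t ^ 2 / 2) with hg
  have hcont : Continuous g := by fun_prop
  have hint : Integrable g := integrable_std
  have heq : stdNormalCDF = fun w => stdNormalCDF 0 + ∫ t in (0:ℝ)..w, g t := by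
    funext w
    have := intervalIntegral.integral_Iic_sub_Iic (f := g) (μ := volume)
      hint.integrableOn hint.integrableOn (a := 0) (b := w)
    simp only [stdNormalCDF] at *
    linarith [this]
  rw [heq]
  have : HasDerivAt (fun w => ∫ t in (0:ℝ)..w, g t) (g z) z :=
    intervalIntegral.integral_hasDerivAt_right hint.intervalIntegrable
      hcont.aestronglyMeasurable.stronglyMeasurableAtFilter hcont.continuousAt
  exact this.const_add (stdNormalCDF 0)

lemma hasDerivAt_G (ε y m σ : ℝ) (hε : 0 < ε) (hσ : 0 < σ) (h : ℝ) :
    HasDerivAt (fun h => (((y-m)^2+σ^2)/ε^2 - 1) * stdNormalCDF ((h-m)/σ)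
        + σ/(Real.sqrt (2*Real.pi)*ε^2) * ((2*y-m-h) * Real.exp (-(h-m)^2/(2*σ^2))))
      (gaussianPDFReal m ⟨σ^2, sq_nonneg σ⟩ h * (((y-h)/ε)^2 - 1)) h := by
  have hπ : 0 < Real.sqrt (2 * Real.pi) := Real.sqrt_pos.mpr (by positivity)
  have h1 : HasDerivAt (fun h : ℝ => (h - m)/σ) (1/σ) h := by
    simpa using ((hasDerivAt_id h).sub_const m).div_const σ
  have hΦ : HasDerivAt (fun h : ℝ => stdNormalCDF ((h-m)/σ))
      ((Real.sqrt (2 * Real.pi))⁻¹ * Real.exp (-((h-m)/σ) ^ 2 / 2) * (1/σ)) h :=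
    (hasDerivAt_stdNormalCDF _).comp h h1
  have hu : HasDerivAt (fun h : ℝ => -(h-m)^2/(2*σ^2)) (-(2*(h-m)^1*1)/(2*σ^2)) h := by
    exact (((hasDerivAt_id h).sub_const m).pow 2).neg.div_const (2*σ^2)
  have hexp : HasDerivAt (fun h : ℝ => Real.exp (-(h-m)^2/(2*σ^2)))
      (Real.exp (-(h-m)^2/(2*σ^2)) * (-(2*(h-m)^1*1)/(2*σ^2))) h := hu.exp
  have hlin : HasDerivAt (fun h : ℝ => 2*y-m-h) (-1) h := by
    exact ((hasDerivAt_const h (2*y-m)).sub (hasDerivAt_id' h)).congr_deriv (by ring)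
  have hprod := hlin.mul hexp
  have hG := (hΦ.const_mul (((y-m)^2+σ^2)/ε^2 - 1)).add
    (hprod.const_mul (σ/(Real.sqrt (2*Real.pi)*ε^2)))
  have hexpeq : Real.exp (-((h-m)/σ) ^ 2 / 2) = Real.exp (-(h-m)^2/(2*σ^2)) := by
    rw [div_pow]; ring_nf
  have hsqrt : Real.sqrt (2 * Real.pi * σ^2) = Real.sqrt (2 * Real.pi) * σ := by
    rw [Real.sqrt_mul (by positivity), Real.sqrt_sq hσ.le]
  refine hG.congr_deriv ?_
  rw [hexpeq]; unfold gaussianPDFReal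
  change _ = (√(2 * π * σ^2))⁻¹ * rexp (-(h - m) ^ 2 / (2 * σ^2)) * (((y-h)/ε)^2 - 1)
  rw [hsqrt]
  field_simp
  ring

/-- Gaussian expectation of the clipped squared bounded loss
`ℓ_2(y, ŷ) = min{((y − ŷ)/ε)², 1}` (corrected form of the paper's expression). -/
theorem gaussian_clipped_sq_loss (ε y m σ : ℝ) (hε : 0 < ε) (hσ : 0 < σ) :
    ∫ h, min (((y - h) / ε) ^ 2) 1 ∂(gaussianReal m ⟨σ ^ 2, sq_nonneg σ⟩)
      = 1 + (((y - m) ^ 2 + σ ^ 2) / ε ^ 2 - 1)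
            * (stdNormalCDF ((y + ε - m) / σ) - stdNormalCDF ((y - ε - m) / σ))
        + (σ / (Real.sqrt (2 * Real.pi) * ε ^ 2))
            * ((y - ε - m) * Real.exp (-(y + ε - m) ^ 2 / (2 * σ ^ 2))
              - (y + ε - m) * Real.exp (-(y - ε - m) ^ 2 / (2 * σ ^ 2))) := by
  have hv0 : (⟨σ ^ 2, sq_nonneg σ⟩ : NNReal) ≠ 0 := by
    intro hcon
    exact pow_ne_zero 2 hσ.ne' (congrArg Subtype.val hcon)
  set v : NNReal := ⟨σ ^ 2, sq_nonneg σ⟩ with hv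
  set p : ℝ → ℝ := gaussianPDFReal m v with hp
  have hpcont : Continuous p := by
    simp only [hp, gaussianPDFReal_def]; fun_prop
  have hpnn : ∀ x, 0 ≤ p x := gaussianPDFReal_nonneg m v
  -- Step A: reduce to a Lebesgue integral
  have stepA : ∫ h, min (((y - h) / ε) ^ 2) 1 ∂(gaussianReal m v)
      = ∫ h, p h * min (((y - h) / ε) ^ 2) 1 := by
    rw [gaussianReal_of_var_ne_zero _ hv0]
    have hmeas : Measurable fun x => (p x).toNNReal :=
      (measurable_gaussianPDFReal m v).real_toNNReal
    rw [show gaussianPDF m v = fun x => ((p x).toNNReal : ENNReal) from rfl,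
      integral_withDensity_eq_integral_smul hmeas]
    congr 1 with x
    simp [NNReal.smul_def, Real.coe_toNNReal _ (hpnn x)]
  -- Step B: pointwise decomposition
  have stepB : (fun h => p h * min (((y - h) / ε) ^ 2) 1)
      = fun h => p h + Set.indicator (Set.Icc (y - ε) (y + ε))
          (fun h => p h * (((y - h) / ε) ^ 2 - 1)) h := by
    funext h
    by_cases hmem : h ∈ Set.Icc (y - ε) (y + ε)
    · rw [Set.indicator_of_mem hmem]
      obtain ⟨h1, h2⟩ := hmem
      have hq : ((y - h) / ε) ^ 2 ≤ 1 := by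
        rw [div_pow, div_le_one (by positivity)]
        nlinarith
      rw [min_eq_left hq]; ring
    · rw [Set.indicator_of_notMem hmem]
      rw [Set.mem_Icc, not_and_or] at hmem
      have hq : 1 ≤ ((y - h) / ε) ^ 2 := by
        rw [div_pow, le_div_iff₀ (by positivity)]
        rcases hmem with hm | hm <;> push_neg at hm <;> nlinarith
      rw [min_eq_right hq]; ring
  -- integrability
  have hind : Integrable (fun h => Set.indicator (Set.Icc (y - ε) (y + ε))
      (fun h => p h * (((y - h) / ε) ^ 2 - 1)) h) := by
    apply (Continuous.integrableOn_Icc (by fun_prop)).integrable_indicator measurableSet_Icc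
  -- Step C/D: compute the integral
  rw [stepA, stepB, integral_add (integrable_gaussianPDFReal m v) hind,
    integral_gaussianPDFReal_eq_one m hv0,
    integral_indicator measurableSet_Icc, MeasureTheory.integral_Icc_eq_integral_Ioc,
    ← intervalIntegral.integral_of_le (by linarith : y - ε ≤ y + ε)]
  rw [intervalIntegral.integral_eq_sub_of_hasDerivAt
    (f := fun h => (((y-m)^2+σ^2)/ε^2 - 1) * stdNormalCDF ((h-m)/σ)
        + σ/(Real.sqrt (2*Real.pi)*ε^2) * ((2*y-m-h) * Real.exp (-(h-m)^2/(2*σ^2))))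
    (fun x _ => hasDerivAt_G ε y m σ hε hσ x)
    (Continuous.intervalIntegrable (hpcont.mul (by fun_prop)) _ _)]
  have e1 : y + ε - m = y + ε - m := rfl
  ring_nf
end
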